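/- Let h be the Hessenberg function h = (2,3,…,n,n) (the Peterson case). The ℚ-algebra homomorphism from the polynomial ring ℚ[y_1,…,y_{n−1},t] to ℚ[x_1,…,x_n,t]/I(h) sending y_j to the class of p_j (1 ≤ j ≤ n−1) and t to the class of t descends to a ℚ-algebra isomorphism ℚ[y_1,…,y_{n−1},t]/((−y_{j−1} + 2y_j − y_{j+1} − 2t)·y_j : 1 ≤ j ≤ n−1) ≅ ℚ[x_1,…,x_n,t]/I(h), where by convention y_0 := 0 and y_n := 0. -/
import Mathlib


open MvPolynomial Finset

/-- The variable `t` in `ℚ[x_1,…,x_n,t]`, realized as `MvPolynomial (Option (Fin n)) ℚ`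
with `t = X none`. -/
noncomputable def tv (n : ℕ) : MvPolynomial (Option (Fin n)) ℚ := X none

/-- The variable `x_k` (for `1 ≤ k ≤ n`) in `ℚ[x_1,…,x_n,t]`. -/
noncomputable def xv (n : ℕ) (k : ℕ) : MvPolynomial (Option (Fin n)) ℚ :=
  if h : k - 1 < n then X (some ⟨k - 1, h⟩) else 0

/-- `p_i = ∑_{k=1}^i (x_k - k t)`, with `p_0 = 0`. -/
noncomputable def pp (n : ℕ) (i : ℕ) : MvPolynomial (Option (Fin n)) ℚ :=
  ∑ k ∈ Finset.range i, (xv n (k + 1) - C ((k : ℚ) + 1) * tv n)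

/-- The polynomials `f_{i,j}`: `f_{i,0} = 0`, `f_{j,j} = p_j`, and
`f_{i,j} = f_{i-1,j-1} + (x_j - x_i - t) f_{i-1,j}` for `i > j ≥ 1`. -/
noncomputable def ff (n : ℕ) : ℕ → ℕ → MvPolynomial (Option (Fin n)) ℚ
  | _, 0 => 0
  | 0, _ + 1 => 0
  | i + 1, j + 1 =>
      if i = j then pp n (j + 1)
      else ff n i j + (xv n (j + 1) - xv n (i + 1) - tv n) * ff n i (j + 1)


/-- The variable `y_j` (for `1 ≤ j ≤ m`) in `ℚ[y_1,…,y_m,t]`, with the conventions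
`y_0 = 0` and `y_j = 0` for `j > m`. -/
noncomputable def yv (m : ℕ) (j : ℕ) : MvPolynomial (Option (Fin m)) ℚ :=
  if h : 1 ≤ j ∧ j - 1 < m then X (some (⟨j - 1, h.2⟩ : Fin m)) else 0

noncomputable def qq (n : ℕ) (k : ℕ) : MvPolynomial (Option (Fin n)) ℚ :=
  (-(pp n (k-1)) + 2 * pp n k - pp n (k+1) - 2 * tv n) * pp n k

lemma pp_succ (n k : ℕ) : pp n (k+1) = pp n k + (xv n (k+1) - C ((k:ℚ)+1) * tv n) := by
  simp only [pp, Finset.sum_range_succ]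

lemma xv_eq (n k : ℕ) : xv n (k+1) = pp n (k+1) - pp n k + C ((k:ℚ)+1) * tv n := by
  rw [pp_succ]; ring

lemma ff_diag (n j : ℕ) : ff n (j+1) (j+1) = pp n (j+1) := by simp [ff]

lemma ff_diag' (n j : ℕ) (hj : 1 ≤ j) : ff n j j = pp n j := by
  obtain ⟨m, rfl⟩ : ∃ m, j = m + 1 := ⟨j - 1, by omega⟩
  exact ff_diag n m

lemma ff_sub (n j : ℕ) : ff n (j+1) j = ∑ k ∈ Finset.range j, qq n (k+1) := by
  induction j with
  | zero => simp [ff]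
  | succ j ih =>
    have h1 : ff n (j+1+1) (j+1) = ff n (j+1) j
        + (xv n (j+1) - xv n (j+1+1) - tv n) * ff n (j+1) (j+1) := by
      rw [ff]; simp [Nat.succ_ne_self]
    rw [h1, ff_diag, ih, Finset.sum_range_succ]
    congr 1
    rw [qq, xv_eq n j, xv_eq n (j+1)]
    push_cast
    simp only [map_add, map_one]
    ring

/-- The inverse map `x_{i+1} ↦ y_{i+1} - y_i + (i+1)t`, `t ↦ t`. -/
noncomputable def Ph (n : ℕ) (J : Ideal (MvPolynomial (Option (Fin (n-1))) ℚ)) :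
    MvPolynomial (Option (Fin n)) ℚ →ₐ[ℚ] (MvPolynomial (Option (Fin (n-1))) ℚ ⧸ J) :=
  aeval (fun v => Option.elim v (Ideal.Quotient.mk J (X none))
    (fun i : Fin n => Ideal.Quotient.mk J
      (yv (n-1) ((i:ℕ)+1) - yv (n-1) (i:ℕ) + C (((i:ℕ):ℚ)+1) * X none)))

lemma Ph_X (n : ℕ) (J : Ideal (MvPolynomial (Option (Fin (n-1))) ℚ)) (i : Fin n) :
    Ph n J (X (some i)) = Ideal.Quotient.mk J
      (yv (n-1) ((i:ℕ)+1) - yv (n-1) (i:ℕ) + C (((i:ℕ):ℚ)+1) * X none) := by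
  simp [Ph, aeval_X]

lemma Ph_t (n : ℕ) (J : Ideal (MvPolynomial (Option (Fin (n-1))) ℚ)) :
    Ph n J (tv n) = Ideal.Quotient.mk J (X none) := by
  simp [Ph, tv, aeval_X]

lemma Ph_C (n : ℕ) (J : Ideal (MvPolynomial (Option (Fin (n-1))) ℚ)) (a : ℚ) :
    Ph n J (C a) = Ideal.Quotient.mk J (C a) := by
  simp [Ph, algHom_C]
  rfl

lemma Ph_xv (n : ℕ) (J : Ideal (MvPolynomial (Option (Fin (n-1))) ℚ)) (k : ℕ) (hk : k < n) :
    Ph n J (xv n (k+1)) = Ideal.Quotient.mk J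
      (yv (n-1) (k+1) - yv (n-1) k + C ((k:ℚ)+1) * X none) := by
  have : xv n (k+1) = X (some (⟨k, hk⟩ : Fin n)) := by
    simp only [xv, Nat.add_sub_cancel, dif_pos hk]
  rw [this, Ph_X]

lemma yv_zero (m : ℕ) : yv m 0 = 0 := by simp [yv]

lemma Ph_pp (n : ℕ) (J : Ideal (MvPolynomial (Option (Fin (n-1))) ℚ)) (j : ℕ) (hj : j ≤ n) :
    Ph n J (pp n j) = Ideal.Quotient.mk J (yv (n-1) j) := by
  have key : ∀ k ∈ Finset.range j, Ph n J (xv n (k+1) - C ((k:ℚ)+1) * tv n)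
      = Ideal.Quotient.mk J (yv (n-1) (k+1)) - Ideal.Quotient.mk J (yv (n-1) k) := by
    intro k hk
    have hkn : k < n := lt_of_lt_of_le (Finset.mem_range.1 hk) hj
    rw [map_sub, map_mul, Ph_xv n J k hkn, Ph_C, Ph_t, ← map_mul, ← map_sub, ← map_sub]
    congr 1
    ring
  rw [pp, map_sum, Finset.sum_congr rfl key, Finset.sum_range_sub
    (f := fun k => Ideal.Quotient.mk J (yv (n-1) k)), yv_zero, map_zero, sub_zero]


set_option maxHeartbeats 1600000 in
/-- For the Peterson Hessenberg function `h = (2,3,…,n,n)`, the `ℚ`-algebra homomorphism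
`ℚ[y_1,…,y_{n-1},t] → ℚ[x_1,…,x_n,t]/I(h)` sending `y_j ↦ [p_j]` and `t ↦ [t]` descends
to a `ℚ`-algebra isomorphism
`ℚ[y_1,…,y_{n-1},t]/((-y_{j-1} + 2y_j - y_{j+1} - 2t)·y_j : 1 ≤ j ≤ n-1) ≅
 ℚ[x_1,…,x_n,t]/I(h)` (with the conventions `y_0 = 0`, `y_n = 0`). -/
theorem stmt7 (n : ℕ) (hn : 2 ≤ n) (h : ℕ → ℕ)
    (hP : ∀ j : ℕ, 1 ≤ j → j ≤ n - 1 → h j = j + 1) (hPn : h n = n)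
    (Ih : Ideal (MvPolynomial (Option (Fin n)) ℚ))
    (hIh : Ih = Ideal.span ((fun j => ff n (h j) j) '' Set.Icc 1 n))
    (J : Ideal (MvPolynomial (Option (Fin (n - 1))) ℚ))
    (hJ : J = Ideal.span
      ((fun j => (-(yv (n - 1) (j - 1)) + 2 * yv (n - 1) j - yv (n - 1) (j + 1)
          - 2 * X none) * yv (n - 1) j) '' Set.Icc 1 (n - 1)))
    (φ : MvPolynomial (Option (Fin (n - 1))) ℚ →ₐ[ℚ] (MvPolynomial (Option (Fin n)) ℚ ⧸ Ih))
    (hφ : φ = MvPolynomial.aeval (fun v => Option.elim v (Ideal.Quotient.mk Ih (tv n))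
      (fun j : Fin (n - 1) => Ideal.Quotient.mk Ih (pp n ((j : ℕ) + 1))))) :
    ∃ ψ : (MvPolynomial (Option (Fin (n - 1))) ℚ ⧸ J) ≃ₐ[ℚ]
        (MvPolynomial (Option (Fin n)) ℚ ⧸ Ih),
      ∀ g : MvPolynomial (Option (Fin (n - 1))) ℚ, ψ (Ideal.Quotient.mk J g) = φ g := by
  -- basic facts about φ
  have hφX : ∀ j : Fin (n-1), φ (X (some j)) = Ideal.Quotient.mk Ih (pp n ((j:ℕ)+1)) := by
    intro j; rw [hφ]; simp [aeval_X]
  have hφt : φ (X none) = Ideal.Quotient.mk Ih (tv n) := by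
    rw [hφ]; simp [aeval_X]
  have hφC : ∀ a : ℚ, φ (C a) = Ideal.Quotient.mk Ih (C a) := by
    intro a; rw [hφ]; simp [algHom_C]; rfl
  -- yv n = 0
  have hyvn : yv (n-1) n = 0 := by
    rw [yv, dif_neg]; intro ⟨_, h2⟩; omega
  -- memberships in Ih
  have hG : ∀ j, j ≤ n-1 → ff n (j+1) j ∈ Ih := by
    intro j hj
    rcases Nat.eq_zero_or_pos j with rfl | hj1
    · have : ff n 1 0 = 0 := by simp [ff]
      rw [this]; exact Ih.zero_mem
    · rw [hIh, ← hP j hj1 hj]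
      exact Ideal.subset_span ⟨j, ⟨hj1, by omega⟩, rfl⟩
  have hppn : pp n n ∈ Ih := by
    have e : ff n (h n) n = pp n n := by rw [hPn, ff_diag' n n (by omega)]
    rw [hIh, ← e]
    exact Ideal.subset_span ⟨n, ⟨by omega, le_rfl⟩, rfl⟩
  have hq : ∀ m, 1 ≤ m → m ≤ n-1 → qq n m ∈ Ih := by
    intro m h1 h2
    obtain ⟨k, rfl⟩ : ∃ k, m = k + 1 := ⟨m - 1, by omega⟩
    have : qq n (k+1) = ff n (k+1+1) (k+1) - ff n (k+1) k := by
      rw [ff_sub, ff_sub, Finset.sum_range_succ]; ring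
    rw [this]
    exact Ih.sub_mem (hG (k+1) h2) (hG k (by omega))
  -- φ on yv
  have hφyv : ∀ j, j ≤ n → φ (yv (n-1) j) = Ideal.Quotient.mk Ih (pp n j) := by
    intro j hj
    rcases Nat.eq_zero_or_pos j with rfl | hj1
    · simp [yv_zero, pp]
    rcases eq_or_lt_of_le hj with rfl | hjlt
    · rw [hyvn, map_zero, eq_comm, Ideal.Quotient.eq_zero_iff_mem]; exact hppn
    · have hc : 1 ≤ j ∧ j - 1 < n - 1 := ⟨hj1, by omega⟩
      have harg : ((⟨j - 1, hc.2⟩ : Fin (n-1)) : ℕ) + 1 = j := by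
        simp only [Fin.val_mk]; omega
      rw [yv, dif_pos hc, hφX ⟨j - 1, hc.2⟩, harg]
  -- Ph kills Ih
  have hPhq : ∀ m, 1 ≤ m → m ≤ n - 1 → Ph n J (qq n m) = 0 := by
    intro m h1 h2
    have e : Ph n J (qq n m) = Ideal.Quotient.mk J
        ((-(yv (n-1) (m-1)) + 2 * yv (n-1) m - yv (n-1) (m+1) - 2 * X none) * yv (n-1) m) := by
      simp only [qq, map_mul, map_sub, map_add, map_neg, map_ofNat]
      rw [Ph_pp n J (m-1) (by omega), Ph_pp n J m (by omega), Ph_pp n J (m+1) (by omega), Ph_t]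
    rw [e, Ideal.Quotient.eq_zero_iff_mem, hJ]
    exact Ideal.subset_span ⟨m, ⟨h1, h2⟩, rfl⟩
  have hker1 : ∀ a ∈ Ih, Ph n J a = 0 := by
    have hle : Ih ≤ RingHom.ker (Ph n J).toRingHom := by
      rw [hIh, Ideal.span_le]
      rintro s ⟨j, ⟨hj1, hjn⟩, rfl⟩
      simp only [SetLike.mem_coe, RingHom.mem_ker, AlgHom.toRingHom_eq_coe,
        RingHom.coe_coe]
      rcases eq_or_lt_of_le hjn with rfl | hjlt
      · rw [hPn, ff_diag' _ _ (by omega), Ph_pp _ J _ le_rfl, hyvn, map_zero]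
      · rw [hP j hj1 (by omega), ff_sub, map_sum]
        refine Finset.sum_eq_zero fun k hk => ?_
        exact hPhq (k+1) (by omega) (by have := Finset.mem_range.1 hk; omega)
    intro a ha
    exact hle ha
  -- φ kills J
  have hker2 : ∀ a ∈ J, φ a = 0 := by
    have hle : J ≤ RingHom.ker φ.toRingHom := by
      rw [hJ, Ideal.span_le]
      rintro s ⟨j, ⟨hj1, hjn⟩, rfl⟩
      simp only [SetLike.mem_coe, RingHom.mem_ker, AlgHom.toRingHom_eq_coe,
        RingHom.coe_coe]
      have e : φ ((-(yv (n-1) (j-1)) + 2 * yv (n-1) j - yv (n-1) (j+1) - 2 * X none)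
          * yv (n-1) j) = Ideal.Quotient.mk Ih (qq n j) := by
        simp only [qq, map_mul, map_sub, map_add, map_neg, map_ofNat]
        rw [hφyv (j-1) (by omega), hφyv j (by omega), hφyv (j+1) (by omega), hφt]
      rw [e, Ideal.Quotient.eq_zero_iff_mem]
      exact hq j hj1 hjn
    intro a ha
    exact hle ha
  -- the two algebra maps on quotients
  set Ψb := Ideal.Quotient.liftₐ Ih (Ph n J) hker1 with hΨb
  set φb := Ideal.Quotient.liftₐ J φ hker2 with hφb
  have hΨmk : ∀ g, Ψb (Ideal.Quotient.mk Ih g) = Ph n J g := fun g =>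
    Ideal.Quotient.lift_mk Ih _ _
  have hφmk : ∀ g, φb (Ideal.Quotient.mk J g) = φ g := fun g =>
    Ideal.Quotient.lift_mk J _ _
  have h1 : (Ψb.comp φb) = AlgHom.id ℚ _ := by
    apply Ideal.Quotient.algHom_ext
    apply MvPolynomial.algHom_ext
    intro v
    simp only [AlgHom.comp_apply, Ideal.Quotient.mkₐ_eq_mk, AlgHom.id_apply]
    cases v with
    | none =>
      rw [hφmk, hφt, hΨmk, Ph_t]
    | some j =>
      rw [hφmk, hφX, hΨmk, Ph_pp n J ((j:ℕ)+1) (by omega)]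
      congr 1
      have hc : 1 ≤ (j:ℕ)+1 ∧ (j:ℕ)+1-1 < n-1 := ⟨by omega, by omega⟩
      rw [yv, dif_pos hc]
      congr 1
  have h2 : (φb.comp Ψb) = AlgHom.id ℚ _ := by
    apply Ideal.Quotient.algHom_ext
    apply MvPolynomial.algHom_ext
    intro v
    simp only [AlgHom.comp_apply, Ideal.Quotient.mkₐ_eq_mk, AlgHom.id_apply]
    cases v with
    | none =>
      rw [hΨmk, show (X none : MvPolynomial (Option (Fin n)) ℚ) = tv n from rfl, Ph_t,
        hφmk, hφt]
    | some i =>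
      rw [hΨmk, Ph_X, hφmk, map_add, map_sub, map_mul,
        hφyv ((i:ℕ)+1) (by omega), hφyv (i:ℕ) (by omega), hφC, hφt,
        ← map_mul (Ideal.Quotient.mk Ih) (C (((i:ℕ):ℚ)+1)) (tv n),
        ← map_sub (Ideal.Quotient.mk Ih) (pp n ((i:ℕ)+1)) (pp n (i:ℕ)),
        ← map_add (Ideal.Quotient.mk Ih) (pp n ((i:ℕ)+1) - pp n (i:ℕ))
          (C (((i:ℕ):ℚ)+1) * tv n)]
      congr 1
      rw [← xv_eq]
      simp [xv]
  refine ⟨AlgEquiv.ofAlgHom φb Ψb h2 h1, fun g => ?_⟩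
  exact hφmk g
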